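/- arXiv:2604.04124 — 3 statements merged into one kernel-verified Lean document; each statement's English description precedes it below -/
import Mathlib

section
/- Let r ≥ 2. For every permutation σ of {1,…,r}, one has Π_{j=1}^{r−1} O_f^{(2)}(X_{σ(j)}, X_{σ(r)}) ≡ Π_{j=1}^{r−1} O_f^{(2)}(X_j, X_r) Mod f(*). Consequently the rank-r Weil operator O_f^{(r)} (the representative of this class with all partial degrees < n) is a symmetric polynomial in X_1,…,X_r. -/
open Finset MvPolynomial

/-- The rank-two Weil operator `O_g^{(2)}(X_a, X_b) = ∑_{j=1}^{deg g} b_j ∑_{α+β=j-1} X_a^α X_b^β`. -/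
noncomputable def weilO2 {F : Type*} [Field F] {σ : Type*} (g : Polynomial F) (a b : σ) :
    MvPolynomial σ F :=
  ∑ j ∈ Finset.range g.natDegree,
    MvPolynomial.C (g.coeff (j + 1)) *
      ∑ pr ∈ Finset.HasAntidiagonal.antidiagonal j, MvPolynomial.X a ^ pr.1 * MvPolynomial.X b ^ pr.2

section Aux

variable {F : Type*} [Field F] {σ : Type*}

lemma antidiag_swap (x y : MvPolynomial σ F) (j : ℕ) :
    ∑ p ∈ Finset.HasAntidiagonal.antidiagonal j, x ^ p.1 * y ^ p.2
      = ∑ p ∈ Finset.HasAntidiagonal.antidiagonal j, y ^ p.1 * x ^ p.2 := by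
  conv_lhs => rw [← Finset.HasAntidiagonal.map_swap_antidiagonal]
  rw [Finset.sum_map]
  exact Finset.sum_congr rfl fun p _ => by simp [mul_comm]

lemma weilO2_symm (g : Polynomial F) (a b : σ) : weilO2 g a b = weilO2 g b a := by
  unfold weilO2
  refine Finset.sum_congr rfl fun j _ => ?_
  rw [antidiag_swap]

lemma geom_pair (x y : MvPolynomial σ F) (j : ℕ) :
    (x - y) * ∑ p ∈ Finset.HasAntidiagonal.antidiagonal j, x ^ p.1 * y ^ p.2 = x ^ (j + 1) - y ^ (j + 1) := by
  rw [Finset.Nat.sum_antidiagonal_eq_sum_range_succ_mk, mul_comm]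
  have := geom_sum₂_mul x y (j + 1)
  simpa using this

lemma sub_mul_weilO2 (g : Polynomial F) (a b : σ) :
    (MvPolynomial.X a - MvPolynomial.X b) * weilO2 g a b
      = Polynomial.aeval (MvPolynomial.X a : MvPolynomial σ F) g
        - Polynomial.aeval (MvPolynomial.X b : MvPolynomial σ F) g := by
  rw [Polynomial.aeval_eq_sum_range, Polynomial.aeval_eq_sum_range, ← Finset.sum_sub_distrib,
    Finset.sum_range_succ']
  simp only [pow_zero, sub_self, smul_zero, add_zero]
  unfold weilO2
  rw [Finset.mul_sum]
  refine Finset.sum_congr rfl fun j _ => ?_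
  rw [MvPolynomial.smul_eq_C_mul, MvPolynomial.smul_eq_C_mul, mul_left_comm, geom_pair,
    mul_sub]

lemma dvd_weilO2_sub (g : Polynomial F) (a b c : σ) :
    (MvPolynomial.X a - MvPolynomial.X b) ∣ (weilO2 g c a - weilO2 g c b) := by
  unfold weilO2
  rw [← Finset.sum_sub_distrib]
  refine Finset.dvd_sum fun j _ => ?_
  rw [← mul_sub]
  refine Dvd.dvd.mul_left ?_ _
  rw [← Finset.sum_sub_distrib]
  refine Finset.dvd_sum fun p _ => ?_
  rw [← mul_sub]
  exact Dvd.dvd.mul_left (sub_dvd_pow_sub_pow _ _ _) _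

/-- Key congruence: `O(a,b)·O(c,a) ≡ O(a,b)·O(c,b)` modulo the ideal. -/
lemma weil_key_mem (f : Polynomial F) {r : ℕ} (a b c : Fin r) :
    weilO2 f a b * weilO2 f c a - weilO2 f a b * weilO2 f c b
      ∈ Ideal.span (Set.range fun i : Fin r =>
          Polynomial.aeval (MvPolynomial.X i : MvPolynomial (Fin r) F) f) := by
  obtain ⟨T, hT⟩ := dvd_weilO2_sub f a b c
  have hEq : weilO2 f a b * weilO2 f c a - weilO2 f a b * weilO2 f c b
      = (Polynomial.aeval (MvPolynomial.X a : MvPolynomial (Fin r) F) f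
          - Polynomial.aeval (MvPolynomial.X b : MvPolynomial (Fin r) F) f) * T := by
    rw [← sub_mul_weilO2, ← mul_sub, hT]; ring
  rw [hEq, sub_mul]
  exact Ideal.sub_mem _
    (Ideal.mul_mem_right _ _ (Ideal.subset_span ⟨a, rfl⟩))
    (Ideal.mul_mem_right _ _ (Ideal.subset_span ⟨b, rfl⟩))

/-- In a commutative ring, given symmetry and the key relation, the product over all
indices `j ≠ k` of `o j k` does not depend on the center `k`. -/
lemma prod_center_congr {R : Type*} [CommRing R] {r : ℕ} (o : Fin r → Fin r → R)
    (hsymm : ∀ a b, o a b = o b a)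
    (hkey : ∀ a b c, o a b * o c a = o a b * o c b) (k l : Fin r) :
    ∏ j ∈ Finset.univ.erase k, o j k = ∏ j ∈ Finset.univ.erase l, o j l := by
  rcases eq_or_ne k l with rfl | hkl
  · rfl
  · have aux : ∀ S : Finset (Fin r),
        o k l * ∏ j ∈ S, o j k = o k l * ∏ j ∈ S, o j l := by
      intro S
      induction S using Finset.induction_on with
      | empty => rfl
      | @insert c S hc ih =>
        rw [Finset.prod_insert hc, Finset.prod_insert hc]
        calc o k l * (o c k * ∏ j ∈ S, o j k)
            = (o k l * o c k) * ∏ j ∈ S, o j k := by ring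
          _ = (o k l * o c l) * ∏ j ∈ S, o j k := by rw [hkey]
          _ = o c l * (o k l * ∏ j ∈ S, o j k) := by ring
          _ = o c l * (o k l * ∏ j ∈ S, o j l) := by rw [ih]
          _ = o k l * (o c l * ∏ j ∈ S, o j l) := by ring
    have hlk : l ∈ Finset.univ.erase k := Finset.mem_erase.mpr ⟨hkl.symm, Finset.mem_univ _⟩
    have hkl' : k ∈ Finset.univ.erase l := Finset.mem_erase.mpr ⟨hkl, Finset.mem_univ _⟩
    rw [← Finset.mul_prod_erase _ _ hlk, ← Finset.mul_prod_erase _ _ hkl']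
    rw [hsymm l k, Finset.erase_right_comm]
    exact aux _

/-- Reindexing: the product over `Fin m` of `g (τ (castSucc j))` equals the product
over `univ.erase (τ (last m))`. -/
lemma prod_castSucc_eq_erase {R : Type*} [CommMonoid R] {m : ℕ}
    (τ : Equiv.Perm (Fin (m + 1))) (g : Fin (m + 1) → R) :
    ∏ j : Fin m, g (τ (Fin.castSucc j))
      = ∏ k ∈ Finset.univ.erase (τ (Fin.last m)), g k := by
  refine Finset.prod_bij (fun j _ => τ (Fin.castSucc j)) ?_ ?_ ?_ ?_
  · intro j _
    refine Finset.mem_erase.mpr ⟨fun h => ?_, Finset.mem_univ _⟩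
    exact (Fin.castSucc_lt_last j).ne (τ.injective h)
  · intro a _ b _ h
    exact Fin.castSucc_injective _ (τ.injective h)
  · intro k hk
    have hk' : τ.symm k ≠ Fin.last m := by
      intro h
      apply (Finset.mem_erase.mp hk).1
      rw [← h, Equiv.apply_symm_apply]
    obtain ⟨j, hj⟩ := Fin.eq_castSucc_of_ne_last hk'
    exact ⟨j, Finset.mem_univ _, by
      show τ (Fin.castSucc j) = k
      rw [hj, Equiv.apply_symm_apply]⟩
  · intro j _; rfl

lemma rename_weilO2 {σ' : Type*} (g : Polynomial F) (τ : σ → σ') (a b : σ) :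
    MvPolynomial.rename τ (weilO2 g a b) = weilO2 g (τ a) (τ b) := by
  unfold weilO2
  simp [map_sum, map_mul, map_pow, rename_C, rename_X]

lemma rename_mem_span {r : ℕ} (f : Polynomial F) (τ : Equiv.Perm (Fin r))
    {g : MvPolynomial (Fin r) F}
    (hg : g ∈ Ideal.span (Set.range fun i : Fin r =>
        Polynomial.aeval (MvPolynomial.X i : MvPolynomial (Fin r) F) f)) :
    MvPolynomial.rename (⇑τ) g ∈ Ideal.span (Set.range fun i : Fin r =>
        Polynomial.aeval (MvPolynomial.X i : MvPolynomial (Fin r) F) f) := by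
  have h1 := Ideal.mem_map_of_mem (MvPolynomial.rename (R := F) (⇑τ)).toRingHom hg
  rw [Ideal.map_span] at h1
  refine Ideal.span_le.mpr ?_ h1
  rintro x ⟨y, ⟨i, rfl⟩, rfl⟩
  refine Ideal.subset_span ⟨τ i, ?_⟩
  simp only [AlgHom.toRingHom_eq_coe, RingHom.coe_coe]
  rw [← Polynomial.aeval_algHom_apply, rename_X]

/-- Uniqueness of reduced representatives: a member of the ideal with all partial degrees
`< n` is zero. -/
lemma weil_reduced_eq_zero (f : Polynomial F) (hf : f.Monic) (n : ℕ) (hn : f.natDegree = n) :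
    ∀ (r : ℕ) (g : MvPolynomial (Fin r) F),
      g ∈ Ideal.span (Set.range fun i : Fin r =>
        Polynomial.aeval (MvPolynomial.X i : MvPolynomial (Fin r) F) f) →
      (∀ v, MvPolynomial.degreeOf v g < n) → g = 0 := by
  intro r
  induction r with
  | zero =>
    intro g hg _
    have h0 : (Set.range fun i : Fin 0 =>
        Polynomial.aeval (MvPolynomial.X i : MvPolynomial (Fin 0) F) f) = ∅ :=
      Set.range_eq_empty _
    rw [h0, Ideal.span_empty] at hg
    simpa using hg
  | succ r ih =>
    intro g hg hdeg
    set R := MvPolynomial (Fin r) F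
    set e := MvPolynomial.finSuccEquiv F r with he
    set I' : Ideal R := Ideal.span (Set.range fun i : Fin r =>
      Polynomial.aeval (MvPolynomial.X i : R) f) with hI'
    set fR : Polynomial R := f.map (algebraMap F R) with hfR
    have hfRmonic : fR.Monic := hf.map _
    have hfRdeg : fR.natDegree = n := by rw [hfR, hf.natDegree_map, hn]
    -- image of the generators
    have himg : ∀ i : Fin (r + 1),
        e (Polynomial.aeval (MvPolynomial.X i : MvPolynomial (Fin (r+1)) F) f)
          ∈ ({fR} ∪ Set.range fun i : Fin r =>
              (Polynomial.C (Polynomial.aeval (MvPolynomial.X i : R) f) : Polynomial R)) := by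
      intro i
      induction i using Fin.cases with
      | zero =>
        refine Set.mem_union_left _ (Set.mem_singleton_iff.mpr ?_)
        rw [he, ← Polynomial.aeval_algHom_apply (MvPolynomial.finSuccEquiv F r),
          MvPolynomial.finSuccEquiv_X_zero]
        calc Polynomial.aeval (Polynomial.X : Polynomial R) f
            = Polynomial.aeval (Polynomial.X : Polynomial R) fR :=
              (Polynomial.aeval_map_algebraMap (A := R) _ _).symm
          _ = fR := Polynomial.aeval_X_left_apply fR
      | succ j =>
        refine Set.mem_union_right _ ⟨j, ?_⟩
        show Polynomial.C (Polynomial.aeval (MvPolynomial.X j : R) f) = _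
        rw [he, ← Polynomial.aeval_algHom_apply (MvPolynomial.finSuccEquiv F r),
          MvPolynomial.finSuccEquiv_X_succ]
        exact (Polynomial.aeval_algHom_apply Polynomial.CAlgHom (MvPolynomial.X j) f).symm
    have hmem : e g ∈ Ideal.span ({fR} ∪ Set.range fun i : Fin r =>
        (Polynomial.C (Polynomial.aeval (MvPolynomial.X i : R) f) : Polynomial R)) := by
      have h1 := Ideal.mem_map_of_mem (e : MvPolynomial (Fin (r+1)) F ≃+* Polynomial R).toRingHom hg
      rw [Ideal.map_span] at h1
      refine Ideal.span_le.mpr ?_ h1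
      rintro x ⟨y, ⟨i, rfl⟩, rfl⟩
      exact Ideal.subset_span (himg i)
    -- push to quotient by I'
    set φ : Polynomial R →+* Polynomial (R ⧸ I') :=
      Polynomial.mapRingHom (Ideal.Quotient.mk I') with hφ
    have hφmem : φ (e g) ∈ Ideal.span ({φ fR} : Set (Polynomial (R ⧸ I'))) := by
      have h2 := Ideal.mem_map_of_mem φ hmem
      rw [Ideal.map_span] at h2
      refine Ideal.span_le.mpr ?_ h2
      rintro x ⟨y, hy, rfl⟩
      rcases hy with hy | ⟨i, rfl⟩
      · rw [Set.mem_singleton_iff] at hy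
        rw [hy]; exact Ideal.subset_span rfl
      · have hz : (Polynomial.aeval (MvPolynomial.X i : R) f) ∈ I' :=
          Ideal.subset_span ⟨i, rfl⟩
        have : φ (Polynomial.C (Polynomial.aeval (MvPolynomial.X i : R) f)) = 0 := by
          rw [hφ, Polynomial.coe_mapRingHom, Polynomial.map_C,
            Ideal.Quotient.eq_zero_iff_mem.mpr hz, Polynomial.C_0]
        rw [this]; exact Ideal.zero_mem _
    have hφeg : φ (e g) = 0 := by
      rcases subsingleton_or_nontrivial (R ⧸ I') with hs | hnt
      · exact Polynomial.ext fun k => Subsingleton.elim _ _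
      · obtain ⟨A, hA⟩ := Ideal.mem_span_singleton'.mp hφmem
        have hφfR : (φ fR).Monic := hfRmonic.map _
        have hdeg0 : (φ (e g)).natDegree < n := by
          calc (φ (e g)).natDegree ≤ (e g).natDegree := Polynomial.natDegree_map_le
            _ = MvPolynomial.degreeOf 0 g := MvPolynomial.natDegree_finSuccEquiv g
            _ < n := hdeg 0
        have hφfRdeg : (φ fR).natDegree = n := by
          rw [hφ, Polynomial.coe_mapRingHom, hfRmonic.natDegree_map, hfRdeg]
        have hA0 : A = 0 := by
          by_contra hA0
          have hmul := Polynomial.Monic.natDegree_mul' hφfR hA0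
          rw [hφfR.natDegree_mul_comm A, hA] at hmul
          rw [hmul, hφfRdeg] at hdeg0
          omega
        rw [← hA, hA0, zero_mul]
    -- coefficients of e g are in I'
    have hcoeff : ∀ k, (e g).coeff k = 0 := by
      intro k
      have hmemI : (e g).coeff k ∈ I' := by
        have : ((e g).map (Ideal.Quotient.mk I')).coeff k = 0 := by
          rw [show (e g).map (Ideal.Quotient.mk I') = φ (e g) from rfl, hφeg,
            Polynomial.coeff_zero]
        rw [Polynomial.coeff_map] at this
        exact Ideal.Quotient.eq_zero_iff_mem.mp this
      refine ih _ hmemI fun v => ?_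
      calc MvPolynomial.degreeOf v ((e g).coeff k)
          ≤ MvPolynomial.degreeOf v.succ g := MvPolynomial.degreeOf_coeff_finSuccEquiv g v k
        _ < n := hdeg _
    have : e g = 0 := Polynomial.ext fun k => by rw [hcoeff k, Polynomial.coeff_zero]
    have := congrArg e.symm this
    rwa [AlgEquiv.symm_apply_apply, map_zero] at this

end Aux

/-- Let `r = m + 1 ≥ 2`.  For every permutation `σ` of `{1,…,r}`,
`∏_{j=1}^{r-1} O_f^{(2)}(X_{σ(j)}, X_{σ(r)}) ≡ ∏_{j=1}^{r-1} O_f^{(2)}(X_j, X_r) Mod f(*)`.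
Consequently the rank-`r` Weil operator `O_f^{(r)}` (any polynomial with all partial degrees
`< n` congruent to this product mod `f(*)`) is a symmetric polynomial in `X_1,…,X_r`. -/
theorem weil_operator_symmetric {F : Type*} [Field F] [Fintype F]
    (f : Polynomial F) (hf : f.Monic) (n : ℕ) (hn : f.natDegree = n) (hn1 : 1 ≤ n)
    (m : ℕ) (hm : 1 ≤ m) (σ : Equiv.Perm (Fin (m + 1))) :
    ((∏ j : Fin m, weilO2 f (σ (Fin.castSucc j)) (σ (Fin.last m)))
        - (∏ j : Fin m, weilO2 f (Fin.castSucc j) (Fin.last m))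
        ∈ Ideal.span (Set.range fun i : Fin (m + 1) =>
            Polynomial.aeval (MvPolynomial.X i : MvPolynomial (Fin (m + 1)) F) f))
    ∧ (∀ Q : MvPolynomial (Fin (m + 1)) F,
        (∀ v : Fin (m + 1), MvPolynomial.degreeOf v Q < n) →
        (Q - (∏ j : Fin m, weilO2 f (Fin.castSucc j) (Fin.last m))
          ∈ Ideal.span (Set.range fun i : Fin (m + 1) =>
              Polynomial.aeval (MvPolynomial.X i : MvPolynomial (Fin (m + 1)) F) f)) →
        MvPolynomial.rename (⇑σ) Q = Q) := by
  classical
  set I : Ideal (MvPolynomial (Fin (m + 1)) F) := Ideal.span (Set.range fun i : Fin (m + 1) =>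
    Polynomial.aeval (MvPolynomial.X i : MvPolynomial (Fin (m + 1)) F) f) with hI
  have part1 : ∀ τ : Equiv.Perm (Fin (m + 1)),
      (∏ j : Fin m, weilO2 f (τ (Fin.castSucc j)) (τ (Fin.last m)))
        - (∏ j : Fin m, weilO2 f (Fin.castSucc j) (Fin.last m)) ∈ I := by
    intro τ
    rw [← Ideal.Quotient.eq]
    rw [map_prod, map_prod]
    set o : Fin (m + 1) → Fin (m + 1) → (MvPolynomial (Fin (m + 1)) F ⧸ I) :=
      fun a b => Ideal.Quotient.mk I (weilO2 f a b) with ho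
    have hsymm : ∀ a b, o a b = o b a := fun a b =>
      congrArg (Ideal.Quotient.mk I) (weilO2_symm f a b)
    have hkey : ∀ a b c, o a b * o c a = o a b * o c b := by
      intro a b c
      show Ideal.Quotient.mk I (weilO2 f a b) * Ideal.Quotient.mk I (weilO2 f c a)
        = Ideal.Quotient.mk I (weilO2 f a b) * Ideal.Quotient.mk I (weilO2 f c b)
      rw [← map_mul, ← map_mul]
      exact Ideal.Quotient.eq.mpr (weil_key_mem f a b c)
    calc (∏ j : Fin m, o (τ (Fin.castSucc j)) (τ (Fin.last m)))
        = ∏ k ∈ Finset.univ.erase (τ (Fin.last m)), o k (τ (Fin.last m)) :=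
          prod_castSucc_eq_erase τ (fun k => o k (τ (Fin.last m)))
      _ = ∏ k ∈ Finset.univ.erase (Fin.last m), o k (Fin.last m) :=
          prod_center_congr o hsymm hkey _ _
      _ = ∏ j : Fin m, o (Fin.castSucc j) (Fin.last m) :=
          (prod_castSucc_eq_erase 1 (fun k => o k (Fin.last m))).symm
  refine ⟨part1 σ, ?_⟩
  intro Q hQdeg hQmem
  set P : MvPolynomial (Fin (m + 1)) F := ∏ j : Fin m, weilO2 f (Fin.castSucc j) (Fin.last m)
    with hP
  have hrenP : MvPolynomial.rename (⇑σ) P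
      = ∏ j : Fin m, weilO2 f (σ (Fin.castSucc j)) (σ (Fin.last m)) := by
    rw [hP, map_prod]
    exact Finset.prod_congr rfl fun j _ => rename_weilO2 f (⇑σ) _ _
  have hD : MvPolynomial.rename (⇑σ) Q - Q ∈ I := by
    have h1 : MvPolynomial.rename (⇑σ) (Q - P) ∈ I := rename_mem_span f σ hQmem
    rw [map_sub, hrenP] at h1
    have h2 := part1 σ
    have h3 := hQmem
    have : MvPolynomial.rename (⇑σ) Q - Q
        = (MvPolynomial.rename (⇑σ) Q
            - ∏ j : Fin m, weilO2 f (σ (Fin.castSucc j)) (σ (Fin.last m)))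
          + ((∏ j : Fin m, weilO2 f (σ (Fin.castSucc j)) (σ (Fin.last m))) - P)
          - (Q - P) := by ring
    rw [this]
    exact Ideal.sub_mem _ (Ideal.add_mem _ h1 h2) h3
  have hDdeg : ∀ v, MvPolynomial.degreeOf v (MvPolynomial.rename (⇑σ) Q - Q) < n := by
    intro v
    have h1 : MvPolynomial.degreeOf v (MvPolynomial.rename (⇑σ) Q) < n := by
      have := MvPolynomial.degreeOf_rename_of_injective (p := Q) σ.injective (σ.symm v)
      rw [Equiv.apply_symm_apply] at this
      rw [this]
      exact hQdeg _
    calc MvPolynomial.degreeOf v (MvPolynomial.rename (⇑σ) Q - Q)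
        ≤ max (MvPolynomial.degreeOf v (MvPolynomial.rename (⇑σ) Q))
            (MvPolynomial.degreeOf v Q) := MvPolynomial.degreeOf_sub_le _ _ _
      _ < n := max_lt h1 (hQdeg v)
  have := weil_reduced_eq_zero f hf n hn (m + 1) _ hD hDdeg
  exact sub_eq_zero.mp this
end

section
/- Suppose f = m·n is a product of two monic polynomials m, n ∈ 𝔽_q[t]. Let r ≥ 2 and let l ∈ {1,…,r−1}. Then, modulo the ideal of 𝔽_q[X_1,…,X_r] generated by f(X_1),…,f(X_r), one has Π_{j=1}^{r−1} O_f^{(2)}(X_j, X_r) ≡ m(X_l)·O_n^{(2)}(X_l, X_r)·Π_{j∈{1,…,r−1}, j≠l} O_f^{(2)}(X_j, X_r) + (Π_{j∈{1,…,r}, j≠l} n(X_j))·Π_{j=1}^{r−1} O_m^{(2)}(X_j, X_r). -/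
open Finset MvPolynomial

lemma weilO2_key {F : Type*} [Field F] {σ : Type*} (g : Polynomial F) (a b : σ) :
    (MvPolynomial.X a - MvPolynomial.X b) * weilO2 g a b
      = Polynomial.aeval (MvPolynomial.X a) g - Polynomial.aeval (MvPolynomial.X b) g := by
  rw [weilO2, Finset.mul_sum, Polynomial.aeval_eq_sum_range, Polynomial.aeval_eq_sum_range,
    ← Finset.sum_sub_distrib, Finset.sum_range_succ']
  simp only [pow_zero, sub_self, smul_eq_C_mul]
  rw [add_zero]
  refine Finset.sum_congr rfl fun j _ => ?_
  rw [Finset.Nat.sum_antidiagonal_eq_sum_range_succ_mk]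
  have h := geom_sum₂_mul (MvPolynomial.X a : MvPolynomial σ F) (MvPolynomial.X b) (j + 1)
  simp only [Nat.add_sub_cancel] at h
  calc (MvPolynomial.X a - MvPolynomial.X b) *
        (MvPolynomial.C (g.coeff (j + 1)) *
          ∑ k ∈ Finset.range (j + 1), MvPolynomial.X a ^ k * MvPolynomial.X b ^ (j - k))
      = MvPolynomial.C (g.coeff (j + 1)) *
        ((∑ k ∈ Finset.range (j + 1), MvPolynomial.X a ^ k * MvPolynomial.X b ^ (j - k)) *
          (MvPolynomial.X a - MvPolynomial.X b)) := by ring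
    _ = _ := by rw [h]; ring

lemma weilO2_mul {F : Type*} [Field F] {σ : Type*} (m n : Polynomial F) (a b : σ)
    (hab : a ≠ b) :
    weilO2 (m * n) a b
      = Polynomial.aeval (MvPolynomial.X a) n * weilO2 m a b
        + Polynomial.aeval (MvPolynomial.X b) m * weilO2 n a b := by
  have h0 : (MvPolynomial.X a - MvPolynomial.X b : MvPolynomial σ F) ≠ 0 :=
    sub_ne_zero.mpr fun h => hab (MvPolynomial.X_injective h)
  apply mul_left_cancel₀ h0
  have h1 := weilO2_key m a b
  have h2 := weilO2_key n a b
  rw [weilO2_key, map_mul, map_mul]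
  linear_combination (-(Polynomial.aeval (MvPolynomial.X a) n)) * h1
    - (Polynomial.aeval (MvPolynomial.X b) m) * h2

lemma prod_add_mul {R : Type*} [CommRing R] {ι : Type*} (s : Finset ι) (a b : ι → R) (c : R) :
    ∃ q, ∏ i ∈ s, (a i + c * b i) = (∏ i ∈ s, a i) + c * q := by
  classical
  induction s using Finset.induction_on with
  | empty => exact ⟨0, by simp⟩
  | @insert i t hi ih =>
    obtain ⟨q, hq⟩ := ih
    refine ⟨b i * ((∏ j ∈ t, a j) + c * q) + a i * q, ?_⟩
    rw [Finset.prod_insert hi, Finset.prod_insert hi, hq]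
    ring

lemma prod_erase_castSucc {R : Type*} [CommMonoid R] {n : ℕ} (l : Fin (n + 1))
    (f : Fin (n + 2) → R) :
    ∏ j ∈ Finset.univ.erase (Fin.castSucc l), f j
      = f (Fin.last (n + 1)) * ∏ j ∈ Finset.univ.erase l, f (Fin.castSucc j) := by
  classical
  have hset : (Finset.univ : Finset (Fin (n + 2))).erase (Fin.castSucc l)
      = insert (Fin.last (n + 1)) ((Finset.univ.erase l).image Fin.castSucc) := by
    ext j
    simp only [Finset.mem_erase, Finset.mem_univ, and_true, Finset.mem_insert,
      Finset.mem_image, true_and]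
    constructor
    · intro hj
      rcases Fin.eq_castSucc_or_eq_last j with ⟨i, rfl⟩ | rfl
      · exact Or.inr ⟨i, fun h => hj (by rw [h]), rfl⟩
      · exact Or.inl rfl
    · rintro (rfl | ⟨i, hi, rfl⟩)
      · exact (Fin.castSucc_lt_last l).ne'
      · exact fun h => hi (Fin.castSucc_injective _ h)
  rw [hset, Finset.prod_insert, Finset.prod_image]
  · intro x _ y _ h; exact Fin.castSucc_injective _ h
  · simp only [Finset.mem_image, Finset.mem_erase]
    rintro ⟨i, _, hi⟩
    exact (Fin.castSucc_lt_last i).ne hi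

/-- Suppose `f = m·n` with `m, n` monic, let `r = s + 2 ≥ 2` and
`l ∈ {1,…,r-1}`.  Then, modulo the ideal of `𝔽_q[X_1,…,X_r]` generated by `f(X_1),…,f(X_r)`,
`∏_{j=1}^{r-1} O_f^{(2)}(X_j, X_r)
  ≡ m(X_l)·O_n^{(2)}(X_l, X_r)·∏_{j≠l, j<r} O_f^{(2)}(X_j, X_r)
    + (∏_{j≠l} n(X_j))·∏_{j=1}^{r-1} O_m^{(2)}(X_j, X_r)`. -/
theorem weil_operator_factorization {F : Type*} [Field F] [Fintype F]
    (mm nn : Polynomial F) (hm : mm.Monic) (hnn : nn.Monic)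
    (s : ℕ) (l : Fin (s + 1)) :
    (∏ j : Fin (s + 1), weilO2 (mm * nn) (Fin.castSucc j) (Fin.last (s + 1)))
      - (Polynomial.aeval (MvPolynomial.X (Fin.castSucc l) : MvPolynomial (Fin (s + 2)) F) mm
          * weilO2 nn (Fin.castSucc l) (Fin.last (s + 1))
          * ∏ j ∈ Finset.univ.erase l, weilO2 (mm * nn) (Fin.castSucc j) (Fin.last (s + 1))
        + (∏ j ∈ Finset.univ.erase (Fin.castSucc l),
            Polynomial.aeval (MvPolynomial.X j : MvPolynomial (Fin (s + 2)) F) nn)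
          * ∏ j : Fin (s + 1), weilO2 mm (Fin.castSucc j) (Fin.last (s + 1)))
      ∈ Ideal.span (Set.range fun i : Fin (s + 2) =>
          Polynomial.aeval (MvPolynomial.X i : MvPolynomial (Fin (s + 2)) F) (mm * nn)) := by
  classical
  have hne : ∀ j : Fin (s + 1), (Fin.castSucc j : Fin (s + 2)) ≠ Fin.last (s + 1) :=
    fun j => (Fin.castSucc_lt_last j).ne
  -- each factor splits
  have hOf : ∀ j : Fin (s + 1), weilO2 (mm * nn) (Fin.castSucc j) (Fin.last (s + 1))
      = Polynomial.aeval (MvPolynomial.X (Fin.castSucc j) : MvPolynomial (Fin (s + 2)) F) nn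
          * weilO2 mm (Fin.castSucc j) (Fin.last (s + 1))
        + Polynomial.aeval (MvPolynomial.X (Fin.last (s + 1)) : MvPolynomial (Fin (s + 2)) F) mm
          * weilO2 nn (Fin.castSucc j) (Fin.last (s + 1)) :=
    fun j => weilO2_mul mm nn _ _ (hne j)
  have hOfl : weilO2 (mm * nn) (Fin.castSucc l) (Fin.last (s + 1))
      = Polynomial.aeval (MvPolynomial.X (Fin.castSucc l) : MvPolynomial (Fin (s + 2)) F) mm
          * weilO2 nn (Fin.castSucc l) (Fin.last (s + 1))
        + Polynomial.aeval (MvPolynomial.X (Fin.last (s + 1)) : MvPolynomial (Fin (s + 2)) F) nn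
          * weilO2 mm (Fin.castSucc l) (Fin.last (s + 1)) := by
    rw [mul_comm mm nn]; exact weilO2_mul nn mm _ _ (hne l)
  obtain ⟨q, hq⟩ := prod_add_mul (Finset.univ.erase l)
    (fun j => Polynomial.aeval (MvPolynomial.X (Fin.castSucc j) : MvPolynomial (Fin (s + 2)) F) nn
      * weilO2 mm (Fin.castSucc j) (Fin.last (s + 1)))
    (fun j => weilO2 nn (Fin.castSucc j) (Fin.last (s + 1)))
    (Polynomial.aeval (MvPolynomial.X (Fin.last (s + 1)) : MvPolynomial (Fin (s + 2)) F) mm)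
  have hP : ∏ j ∈ Finset.univ.erase l, weilO2 (mm * nn) (Fin.castSucc j) (Fin.last (s + 1))
      = (∏ j ∈ Finset.univ.erase l,
            Polynomial.aeval (MvPolynomial.X (Fin.castSucc j) : MvPolynomial (Fin (s + 2)) F) nn)
          * (∏ j ∈ Finset.univ.erase l, weilO2 mm (Fin.castSucc j) (Fin.last (s + 1)))
        + Polynomial.aeval (MvPolynomial.X (Fin.last (s + 1)) : MvPolynomial (Fin (s + 2)) F) mm
          * q := by
    rw [← Finset.prod_mul_distrib, ← hq]
    exact Finset.prod_congr rfl fun j _ => hOf j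
  have hN := prod_erase_castSucc l
    (fun j => Polynomial.aeval (MvPolynomial.X j : MvPolynomial (Fin (s + 2)) F) nn)
  have hUf : weilO2 (mm * nn) (Fin.castSucc l) (Fin.last (s + 1))
      * ∏ j ∈ Finset.univ.erase l, weilO2 (mm * nn) (Fin.castSucc j) (Fin.last (s + 1))
      = ∏ j : Fin (s + 1), weilO2 (mm * nn) (Fin.castSucc j) (Fin.last (s + 1)) :=
    Finset.mul_prod_erase Finset.univ
      (fun j => weilO2 (mm * nn) (Fin.castSucc j) (Fin.last (s + 1))) (Finset.mem_univ l)
  have hUm : weilO2 mm (Fin.castSucc l) (Fin.last (s + 1))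
      * ∏ j ∈ Finset.univ.erase l, weilO2 mm (Fin.castSucc j) (Fin.last (s + 1))
      = ∏ j : Fin (s + 1), weilO2 mm (Fin.castSucc j) (Fin.last (s + 1)) :=
    Finset.mul_prod_erase Finset.univ
      (fun j => weilO2 mm (Fin.castSucc j) (Fin.last (s + 1))) (Finset.mem_univ l)
  have key : (∏ j : Fin (s + 1), weilO2 (mm * nn) (Fin.castSucc j) (Fin.last (s + 1)))
      - (Polynomial.aeval (MvPolynomial.X (Fin.castSucc l) : MvPolynomial (Fin (s + 2)) F) mm
          * weilO2 nn (Fin.castSucc l) (Fin.last (s + 1))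
          * ∏ j ∈ Finset.univ.erase l, weilO2 (mm * nn) (Fin.castSucc j) (Fin.last (s + 1))
        + (∏ j ∈ Finset.univ.erase (Fin.castSucc l),
            Polynomial.aeval (MvPolynomial.X j : MvPolynomial (Fin (s + 2)) F) nn)
          * ∏ j : Fin (s + 1), weilO2 mm (Fin.castSucc j) (Fin.last (s + 1)))
      = weilO2 mm (Fin.castSucc l) (Fin.last (s + 1)) * q
        * Polynomial.aeval (MvPolynomial.X (Fin.last (s + 1)) : MvPolynomial (Fin (s + 2)) F)
            (mm * nn) := by
    rw [← hUf, ← hUm, hOfl, hP, hN, map_mul]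
    ring
  rw [key]
  exact Ideal.mul_mem_left _ _ (Ideal.subset_span ⟨Fin.last (s + 1), rfl⟩)
end

section
/- Suppose f = (t − ζ)·m with ζ ∈ 𝔽_q and m ∈ 𝔽_q[t] monic. Let r ≥ 2 and l ∈ {1,…,r−1}. Then, modulo the ideal of 𝔽_q[X_1,…,X_r] generated by f(X_1),…,f(X_r), one has Π_{j=1}^{r−1} O_f^{(2)}(X_j, X_r) ≡ m(X_l)·Π_{j∈{1,…,r−1}, j≠l} O_f^{(2)}(X_j, X_r) + (Π_{j∈{1,…,r}, j≠l} (X_j − ζ))·Π_{j=1}^{r−1} O_m^{(2)}(X_j, X_r); that is, the rank-r Weil operators satisfy O_f^{(r)}(X_1,…,X_r) = m(X_l)·O_f^{(r−1)}(X_1,…,X̂_l,…,X_r) + Π_{j≠l}(X_j − ζ)·O_m^{(r)}(X_1,…,X_r). -/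
open Finset MvPolynomial

lemma weilO2_mul_sub {F : Type*} [Field F] {σ : Type*} (g : Polynomial F) (a b : σ) :
    (MvPolynomial.X a - MvPolynomial.X b) * weilO2 g a b
      = Polynomial.aeval (MvPolynomial.X a : MvPolynomial σ F) g
        - Polynomial.aeval (MvPolynomial.X b : MvPolynomial σ F) g := by
  have key : ∀ j : ℕ,
      (∑ pr ∈ Finset.HasAntidiagonal.antidiagonal j,
          (MvPolynomial.X a : MvPolynomial σ F) ^ pr.1 * MvPolynomial.X b ^ pr.2)
        * (MvPolynomial.X a - MvPolynomial.X b)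
      = MvPolynomial.X a ^ (j+1) - MvPolynomial.X b ^ (j+1) := by
    intro j
    rw [Finset.Nat.sum_antidiagonal_eq_sum_range_succ_mk]
    exact geom_sum₂_mul (MvPolynomial.X a) (MvPolynomial.X b) (j+1)
  unfold weilO2
  rw [Polynomial.aeval_eq_sum_range, Polynomial.aeval_eq_sum_range, ← Finset.sum_sub_distrib]
  simp only [← smul_sub]
  rw [Finset.sum_range_succ']
  simp only [pow_zero, sub_self, smul_zero, add_zero]
  rw [Finset.mul_sum]
  refine Finset.sum_congr rfl fun j _ => ?_
  rw [← key j, MvPolynomial.smul_eq_C_mul]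
  ring

lemma X_sub_X_ne {F : Type*} [Field F] {σ : Type*} {a b : σ} (hab : a ≠ b) :
    (MvPolynomial.X a - MvPolynomial.X b : MvPolynomial σ F) ≠ 0 :=
  sub_ne_zero.mpr fun h => hab (MvPolynomial.X_injective h)

lemma weilO2_split_left {F : Type*} [Field F] {σ : Type*} {a b : σ} (hab : a ≠ b)
    (ζ : F) (m : Polynomial F) :
    weilO2 ((Polynomial.X - Polynomial.C ζ) * m) a b
      = Polynomial.aeval (MvPolynomial.X a : MvPolynomial σ F) m
        + (MvPolynomial.X b - MvPolynomial.C ζ) * weilO2 m a b := by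
  apply mul_left_cancel₀ (X_sub_X_ne hab)
  have h1 := weilO2_mul_sub ((Polynomial.X - Polynomial.C ζ) * m) a b
  have h2 := weilO2_mul_sub m a b
  have ha : Polynomial.aeval (MvPolynomial.X a : MvPolynomial σ F)
      ((Polynomial.X - Polynomial.C ζ) * m)
      = (MvPolynomial.X a - MvPolynomial.C ζ)
        * Polynomial.aeval (MvPolynomial.X a : MvPolynomial σ F) m := by simp
  have hb : Polynomial.aeval (MvPolynomial.X b : MvPolynomial σ F)
      ((Polynomial.X - Polynomial.C ζ) * m)
      = (MvPolynomial.X b - MvPolynomial.C ζ)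
        * Polynomial.aeval (MvPolynomial.X b : MvPolynomial σ F) m := by simp
  linear_combination h1 + ha - hb - (MvPolynomial.X b - MvPolynomial.C ζ) * h2

lemma weilO2_split_right {F : Type*} [Field F] {σ : Type*} {a b : σ} (hab : a ≠ b)
    (ζ : F) (m : Polynomial F) :
    weilO2 ((Polynomial.X - Polynomial.C ζ) * m) a b
      = Polynomial.aeval (MvPolynomial.X b : MvPolynomial σ F) m
        + (MvPolynomial.X a - MvPolynomial.C ζ) * weilO2 m a b := by
  apply mul_left_cancel₀ (X_sub_X_ne hab)
  have h1 := weilO2_mul_sub ((Polynomial.X - Polynomial.C ζ) * m) a b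
  have h2 := weilO2_mul_sub m a b
  have ha : Polynomial.aeval (MvPolynomial.X a : MvPolynomial σ F)
      ((Polynomial.X - Polynomial.C ζ) * m)
      = (MvPolynomial.X a - MvPolynomial.C ζ)
        * Polynomial.aeval (MvPolynomial.X a : MvPolynomial σ F) m := by simp
  have hb : Polynomial.aeval (MvPolynomial.X b : MvPolynomial σ F)
      ((Polynomial.X - Polynomial.C ζ) * m)
      = (MvPolynomial.X b - MvPolynomial.C ζ)
        * Polynomial.aeval (MvPolynomial.X b : MvPolynomial σ F) m := by simp
  linear_combination h1 + ha - hb - (MvPolynomial.X a - MvPolynomial.C ζ) * h2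

lemma prod_add_sub_prod_dvd {R ι : Type*} [CommRing R] (S : Finset ι) (a : ι → R) (c : R) :
    c ∣ (∏ j ∈ S, (c + a j)) - ∏ j ∈ S, a j := by
  classical
  induction S using Finset.induction_on with
  | empty => simp
  | insert i S h ih =>
    rw [Finset.prod_insert h, Finset.prod_insert h]
    have h3 : (c + a i) * ∏ j ∈ S, (c + a j) - a i * ∏ j ∈ S, a j
        = c * ∏ j ∈ S, (c + a j)
          + a i * ((∏ j ∈ S, (c + a j)) - ∏ j ∈ S, a j) := by ring
    rw [h3]
    exact dvd_add (dvd_mul_right _ _) (ih.mul_left _)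

/-- Suppose `f = (t − ζ)·m` with `ζ ∈ 𝔽_q` and `m` monic, let `r = s + 2 ≥ 2`
and `l ∈ {1,…,r-1}`.  Then, modulo the ideal generated by `f(X_1),…,f(X_r)`,
`∏_{j=1}^{r-1} O_f^{(2)}(X_j, X_r)
  ≡ m(X_l)·∏_{j≠l, j<r} O_f^{(2)}(X_j, X_r)
    + (∏_{j≠l} (X_j − ζ))·∏_{j=1}^{r-1} O_m^{(2)}(X_j, X_r)`;
that is, the rank-`r` Weil operators satisfy Katen's recursion
`O_f^{(r)} = m(X_l)·O_f^{(r-1)}(X_1,…,X̂_l,…,X_r) + ∏_{j≠l}(X_j − ζ)·O_m^{(r)}`. -/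
theorem weil_operator_katen_recursion {F : Type*} [Field F] [Fintype F]
    (ζ : F) (mm : Polynomial F) (hm : mm.Monic)
    (s : ℕ) (l : Fin (s + 1)) :
    (∏ j : Fin (s + 1),
        weilO2 ((Polynomial.X - Polynomial.C ζ) * mm) (Fin.castSucc j) (Fin.last (s + 1)))
      - (Polynomial.aeval (MvPolynomial.X (Fin.castSucc l) : MvPolynomial (Fin (s + 2)) F) mm
          * ∏ j ∈ Finset.univ.erase l,
              weilO2 ((Polynomial.X - Polynomial.C ζ) * mm) (Fin.castSucc j) (Fin.last (s + 1))
        + (∏ j ∈ Finset.univ.erase (Fin.castSucc l),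
            (MvPolynomial.X j - MvPolynomial.C ζ : MvPolynomial (Fin (s + 2)) F))
          * ∏ j : Fin (s + 1), weilO2 mm (Fin.castSucc j) (Fin.last (s + 1)))
      ∈ Ideal.span (Set.range fun i : Fin (s + 2) =>
          Polynomial.aeval (MvPolynomial.X i : MvPolynomial (Fin (s + 2)) F)
            ((Polynomial.X - Polynomial.C ζ) * mm)) := by
  classical
  set ff : Polynomial F := (Polynomial.X - Polynomial.C ζ) * mm with hff
  set r : Fin (s + 2) := Fin.last (s + 1) with hr
  set P : Fin (s + 1) → MvPolynomial (Fin (s + 2)) F :=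
    fun j => weilO2 ff (Fin.castSucc j) r with hP
  set Q : Fin (s + 1) → MvPolynomial (Fin (s + 2)) F :=
    fun j => weilO2 mm (Fin.castSucc j) r with hQ
  set Ml : MvPolynomial (Fin (s + 2)) F :=
    Polynomial.aeval (MvPolynomial.X (Fin.castSucc l)) mm with hMl
  set Mr : MvPolynomial (Fin (s + 2)) F :=
    Polynomial.aeval (MvPolynomial.X r) mm with hMr
  have hne : ∀ j : Fin (s + 1), Fin.castSucc j ≠ r := fun j => (Fin.castSucc_lt_last j).ne
  -- split off the l-th factor of the P-product and Q-product
  have hPl : (∏ j : Fin (s + 1), P j) = P l * ∏ j ∈ Finset.univ.erase l, P j :=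
    (Finset.mul_prod_erase _ _ (Finset.mem_univ l)).symm
  have hQl : (∏ j : Fin (s + 1), Q j) = Q l * ∏ j ∈ Finset.univ.erase l, Q j :=
    (Finset.mul_prod_erase _ _ (Finset.mem_univ l)).symm
  -- the erase product over Fin (s+2)
  have hXl : (MvPolynomial.X (Fin.castSucc l) - MvPolynomial.C ζ :
      MvPolynomial (Fin (s + 2)) F) ≠ 0 := by
    intro h
    have := congrArg (MvPolynomial.coeff (Finsupp.single (Fin.castSucc l) 1)) h
    have h0 : ¬((0 : Fin (s + 2) →₀ ℕ) = Finsupp.single (Fin.castSucc l) 1) := by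
      simp [eq_comm, Finsupp.single_eq_zero]
    simp [MvPolynomial.coeff_X, MvPolynomial.coeff_C, h0] at this
  have hprod : (∏ j ∈ Finset.univ.erase (Fin.castSucc l),
        (MvPolynomial.X j - MvPolynomial.C ζ : MvPolynomial (Fin (s + 2)) F))
      = (MvPolynomial.X r - MvPolynomial.C ζ)
        * ∏ j ∈ Finset.univ.erase l,
            (MvPolynomial.X (Fin.castSucc j) - MvPolynomial.C ζ :
              MvPolynomial (Fin (s + 2)) F) := by
    apply mul_left_cancel₀ hXl
    rw [Finset.mul_prod_erase Finset.univ
        (fun i : Fin (s + 2) => (MvPolynomial.X i - MvPolynomial.C ζ : MvPolynomial (Fin (s + 2)) F))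
        (Finset.mem_univ (Fin.castSucc l)),
      Fin.prod_univ_castSucc (fun i : Fin (s + 2) =>
        (MvPolynomial.X i - MvPolynomial.C ζ : MvPolynomial (Fin (s + 2)) F)),
      ← Finset.mul_prod_erase _ _ (Finset.mem_univ l)]
    ring
  -- the two splitting identities
  have hBl : P l = Ml + (MvPolynomial.X r - MvPolynomial.C ζ) * Q l :=
    weilO2_split_left (hne l) ζ mm
  have hPE : (∏ j ∈ Finset.univ.erase l, P j)
      = ∏ j ∈ Finset.univ.erase l,
          (Mr + (MvPolynomial.X (Fin.castSucc j) - MvPolynomial.C ζ) * Q j) :=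
    Finset.prod_congr rfl fun j _ => weilO2_split_right (hne j) ζ mm
  -- the divisibility
  obtain ⟨q, hq⟩ := prod_add_sub_prod_dvd (Finset.univ.erase l)
    (fun j => (MvPolynomial.X (Fin.castSucc j) - MvPolynomial.C ζ) * Q j) Mr
  have ha : (∏ j ∈ Finset.univ.erase l,
        ((MvPolynomial.X (Fin.castSucc j) - MvPolynomial.C ζ) * Q j))
      = (∏ j ∈ Finset.univ.erase l,
          (MvPolynomial.X (Fin.castSucc j) - MvPolynomial.C ζ :
            MvPolynomial (Fin (s + 2)) F))
        * ∏ j ∈ Finset.univ.erase l, Q j := Finset.prod_mul_distrib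
  have key : (∏ j : Fin (s + 1), P j)
      - (Ml * ∏ j ∈ Finset.univ.erase l, P j
        + (∏ j ∈ Finset.univ.erase (Fin.castSucc l),
            (MvPolynomial.X j - MvPolynomial.C ζ : MvPolynomial (Fin (s + 2)) F))
          * ∏ j : Fin (s + 1), Q j)
      = (Q l * q) * ((MvPolynomial.X r - MvPolynomial.C ζ) * Mr) := by
    rw [hPl, hQl, hprod, hBl, hPE]
    linear_combination ((MvPolynomial.X r - MvPolynomial.C ζ) * Q l) * hq
      + ((MvPolynomial.X r - MvPolynomial.C ζ) * Q l) * ha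
  have haev : (MvPolynomial.X r - MvPolynomial.C ζ) * Mr
      = Polynomial.aeval (MvPolynomial.X r : MvPolynomial (Fin (s + 2)) F) ff := by
    simp [hff, hMr]
  rw [key, haev]
  exact Ideal.mul_mem_left _ _ (Ideal.subset_span ⟨r, rfl⟩)
end
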